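/- Let ℓ > 0, p ∈ (1, ∞), a ∈ ℝ, and let g ∈ C¹((0, ℓ]). Then sup_{0 < r ≤ ℓ} | r^{-(a - 1/p)} g(r) |^p ≤ C ∫₀^ℓ ( |s^{-a} g(s)|^p + |s^{-a+1} g′(s)|^p ) ds, where C is a constant depending only on ℓ, a, and p (and the statement is interpreted as: if the right-hand side integral is finite, the left-hand side is bounded by C times it). -/

import Mathlib

open MeasureTheory Set Filter

lemma aux_abs_sign (x : ℝ) : |Real.sign x| ≤ 1 := by
  rcases lt_trichotomy x 0 with h | h | h
  · simp [Real.sign_of_neg h]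
  · simp [h]
  · simp [Real.sign_of_pos h]

lemma aux_abs_rpow_deriv {p : ℝ} (hp : 1 < p) (x : ℝ) :
    HasDerivAt (fun y : ℝ => |y| ^ p) (p * |x| ^ (p - 1) * Real.sign x) x := by
  rcases lt_trichotomy x 0 with hx | hx | hx
  · have h1 : HasDerivAt (fun y : ℝ => (-y) ^ p) (p * (-x) ^ (p - 1) * (-1)) x := by
      have h0 := (Real.hasDerivAt_rpow_const (x := -x) (p := p)
        (Or.inl (by linarith))).comp x (hasDerivAt_neg x)
      exact h0
    have h2 : (fun y : ℝ => (-y) ^ p) =ᶠ[nhds x] fun y : ℝ => |y| ^ p := by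
      filter_upwards [Iio_mem_nhds hx] with y hy
      rw [abs_of_neg hy]
    have h3 := h1.congr_of_eventuallyEq h2.symm
    have : p * (-x) ^ (p - 1) * (-1) = p * |x| ^ (p - 1) * Real.sign x := by
      rw [abs_of_neg hx, Real.sign_of_neg hx]
    rwa [this] at h3
  · subst hx
    simp only [Real.sign_zero, mul_zero]
    rw [hasDerivAt_iff_tendsto_slope]
    have hg : Tendsto (fun y : ℝ => |y| ^ (p - 1)) (nhdsWithin 0 {(0:ℝ)}ᶜ) (nhds 0) := by
      have hc : ContinuousAt (fun y : ℝ => |y| ^ (p - 1)) 0 :=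
        (Real.continuousAt_rpow_const _ _ (Or.inr (by linarith))).comp
          continuous_abs.continuousAt
      have h2 := hc.tendsto.mono_left (nhdsWithin_le_nhds (s := {(0:ℝ)}ᶜ))
      simpa [Real.zero_rpow (by linarith : p - 1 ≠ 0)] using h2
    apply squeeze_zero_norm' _ hg
    filter_upwards [self_mem_nhdsWithin] with y (hy : y ≠ 0)
    have h0 : slope (fun y : ℝ => |y| ^ p) 0 y = |y| ^ p / y := by
      simp [slope_def_field, Real.zero_rpow (by linarith : p ≠ 0)]
    rw [Real.norm_eq_abs, h0, abs_div]
    rw [abs_of_nonneg (Real.rpow_nonneg (abs_nonneg y) p)]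
    rw [Real.rpow_sub (abs_pos.2 hy), Real.rpow_one]
  · have h1 : HasDerivAt (fun y : ℝ => y ^ p) (p * x ^ (p - 1)) x :=
      Real.hasDerivAt_rpow_const (Or.inl hx.ne')
    have h2 : (fun y : ℝ => y ^ p) =ᶠ[nhds x] fun y : ℝ => |y| ^ p := by
      filter_upwards [Ioi_mem_nhds hx] with y hy
      rw [abs_of_pos hy]
    have h3 := h1.congr_of_eventuallyEq h2.symm
    have : p * x ^ (p - 1) = p * |x| ^ (p - 1) * Real.sign x := by
      rw [abs_of_pos hx, Real.sign_of_pos hx, mul_one]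
    rwa [this] at h3

lemma aux_young {p : ℝ} (hp : 1 < p) {x y : ℝ} (hx : 0 ≤ x) (hy : 0 ≤ y) :
    p * (x ^ (p - 1) * y) ≤ (p - 1) * x ^ p + y ^ p := by
  have hp0 : (0:ℝ) < p := by linarith
  have h := Real.geom_mean_le_arith_mean2_weighted (w₁ := (p-1)/p) (w₂ := 1/p)
    (p₁ := x ^ p) (p₂ := y ^ p) (div_nonneg (by linarith) (by linarith)) (by positivity)
    (Real.rpow_nonneg hx p) (Real.rpow_nonneg hy p) (by field_simp; ring)
  have e1 : (x ^ p) ^ ((p-1)/p) = x ^ (p - 1) := by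
    rw [← Real.rpow_mul hx]
    congr 1
    field_simp
  have e2 : (y ^ p) ^ ((1:ℝ)/p) = y := by
    rw [← Real.rpow_mul hy]
    rw [mul_one_div, div_self hp0.ne', Real.rpow_one]
  rw [e1, e2] at h
  have := mul_le_mul_of_nonneg_left h hp0.le
  calc p * (x ^ (p-1) * y) ≤ p * ((p-1)/p * x^p + 1/p * y^p) := this
    _ = (p - 1) * x ^ p + y ^ p := by field_simp

/-- Weighted one-dimensional Sobolev embedding on `(0, ℓ]`:
for `p ∈ (1,∞)`, `a ∈ ℝ` there is `C = C(ℓ, a, p)` such that for every `g ∈ C¹((0,ℓ])`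
(with derivative `g'`) whose weighted norms are integrable,
`sup_{0 < r ≤ ℓ} |r^{-(a-1/p)} g(r)|^p ≤ C ∫₀^ℓ (|s^{-a} g(s)|^p + |s^{-a+1} g'(s)|^p) ds`. -/
theorem stmt7 (ℓ a p : ℝ) (hℓ : 0 < ℓ) (hp : 1 < p) :
    ∃ C : ℝ, 0 < C ∧
      ∀ g g' : ℝ → ℝ,
        (∀ s ∈ Set.Ioc (0 : ℝ) ℓ, HasDerivAt g (g' s) s) →
        IntegrableOn
          (fun s : ℝ => |s ^ (-a) * g s| ^ p + |s ^ (-a + 1) * g' s| ^ p)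
          (Set.Ioc (0 : ℝ) ℓ) →
        ∀ r ∈ Set.Ioc (0 : ℝ) ℓ,
          |r ^ (-(a - 1 / p)) * g r| ^ p ≤
            C * ∫ s in Set.Ioc (0 : ℝ) ℓ,
              (|s ^ (-a) * g s| ^ p + |s ^ (-a + 1) * g' s| ^ p) := by
  have hp0 : (0:ℝ) < p := by linarith
  set q : ℝ := 1 - a * p with hq
  refine ⟨|q| + p + 2, by positivity, ?_⟩
  intro g g' hg hint r hr
  obtain ⟨hr0, hrℓ⟩ := hr
  set A : ℝ → ℝ := fun s => |s ^ (-a) * g s| ^ p with hA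
  set B : ℝ → ℝ := fun s => |s ^ (-a + 1) * g' s| ^ p with hB
  set I : ℝ := ∫ s in Set.Ioc (0:ℝ) ℓ, (A s + B s) with hI
  have hAnn : ∀ s, 0 ≤ A s := fun s => Real.rpow_nonneg (abs_nonneg _) p
  have hBnn : ∀ s, 0 ≤ B s := fun s => Real.rpow_nonneg (abs_nonneg _) p
  have hABnn : ∀ s, 0 ≤ A s + B s := fun s => add_nonneg (hAnn s) (hBnn s)
  have hInn : 0 ≤ I :=
    setIntegral_nonneg measurableSet_Ioc fun s _ => hABnn s
  -- pointwise formulas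
  have hA' : ∀ s : ℝ, 0 < s → A s = s ^ (-(a * p)) * |g s| ^ p := by
    intro s hs
    simp only [hA, abs_mul, abs_of_nonneg (Real.rpow_nonneg hs.le (-a)),
      Real.mul_rpow (Real.rpow_nonneg hs.le (-a)) (abs_nonneg _), ← Real.rpow_mul hs.le]
    ring_nf
  have hB' : ∀ s : ℝ, 0 < s → B s = s ^ ((-a + 1) * p) * |g' s| ^ p := by
    intro s hs
    simp only [hB, abs_mul, abs_of_nonneg (Real.rpow_nonneg hs.le (-a + 1)),
      Real.mul_rpow (Real.rpow_nonneg hs.le (-a + 1)) (abs_nonneg _), ← Real.rpow_mul hs.le]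
  -- derivative of |g|^p
  set G : ℝ → ℝ := fun t => |g t| ^ p with hGdef
  have hG : ∀ s ∈ Set.Ioc (0:ℝ) ℓ,
      HasDerivAt G ((p * |g s| ^ (p - 1) * Real.sign (g s)) * g' s) s := by
    intro s hs
    exact (aux_abs_rpow_deriv hp (g s)).comp s (hg s hs)
  have hderivG : ∀ s ∈ Set.Ioc (0:ℝ) ℓ,
      deriv G s = (p * |g s| ^ (p - 1) * Real.sign (g s)) * g' s :=
    fun s hs => (hG s hs).deriv
  set F : ℝ → ℝ := fun s => s ^ q * G s with hFdef
  set F' : ℝ → ℝ := fun s => q * s ^ (q - 1) * G s + s ^ q * deriv G s with hF'def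
  have hF : ∀ s ∈ Set.Ioc (0:ℝ) ℓ, HasDerivAt F (F' s) s := by
    intro s hs
    have h1 : HasDerivAt (fun t : ℝ => t ^ q) (q * s ^ (q - 1)) s :=
      Real.hasDerivAt_rpow_const (Or.inl hs.1.ne')
    have h2 := h1.mul (hG s hs)
    have h3 : F' s = q * s ^ (q - 1) * G s
        + s ^ q * ((p * |g s| ^ (p - 1) * Real.sign (g s)) * g' s) := by
      simp only [hF'def]
      rw [hderivG s hs]
    rw [h3]
    exact h2
  -- pointwise bound on F'
  have hFb : ∀ s ∈ Set.Ioc (0:ℝ) ℓ, |F' s| ≤ (|q| + p) * (A s + B s) := by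
    intro s hs
    have hs0 : 0 < s := hs.1
    have hXnn : (0:ℝ) ≤ s ^ (-a) * |g s| :=
      mul_nonneg (Real.rpow_nonneg hs0.le _) (abs_nonneg _)
    have hYnn : (0:ℝ) ≤ s ^ (-a + 1) * |g' s| :=
      mul_nonneg (Real.rpow_nonneg hs0.le _) (abs_nonneg _)
    have kX : (s ^ (-a) * |g s|) ^ p = A s := by
      rw [hA' s hs0, Real.mul_rpow (Real.rpow_nonneg hs0.le _) (abs_nonneg _),
        ← Real.rpow_mul hs0.le]
      norm_num
    have kY : (s ^ (-a + 1) * |g' s|) ^ p = B s := by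
      rw [hB' s hs0, Real.mul_rpow (Real.rpow_nonneg hs0.le _) (abs_nonneg _),
        ← Real.rpow_mul hs0.le]
    have k1 : s ^ (q - 1) * G s = A s := by
      rw [hA' s hs0]
      congr 1
      congr 1
      rw [hq]; ring
    have k2 : s ^ q * (|g s| ^ (p - 1) * |g' s|)
        = (s ^ (-a) * |g s|) ^ (p - 1) * (s ^ (-a + 1) * |g' s|) := by
      rw [Real.mul_rpow (Real.rpow_nonneg hs0.le _) (abs_nonneg _),
        ← Real.rpow_mul hs0.le]
      rw [show (s ^ (-a * (p - 1)) * |g s| ^ (p - 1)) * (s ^ (-a + 1) * |g' s|)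
          = (s ^ (-a * (p - 1)) * s ^ (-a + 1)) * (|g s| ^ (p - 1) * |g' s|) from by ring]
      rw [← Real.rpow_add hs0]
      rw [show -a * (p - 1) + (-a + 1) = q from by rw [hq]; ring]
    have t1 : |q * s ^ (q - 1) * G s| = |q| * A s := by
      rw [abs_mul, abs_mul, abs_of_nonneg (Real.rpow_nonneg hs0.le _),
        abs_of_nonneg (Real.rpow_nonneg (abs_nonneg _) _), mul_assoc, k1]
    have t2 : |s ^ q * deriv G s| ≤ (p - 1) * A s + B s := by
      rw [hderivG s hs]
      have step1 : |(p * |g s| ^ (p - 1) * Real.sign (g s)) * g' s|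
          ≤ p * (|g s| ^ (p - 1) * |g' s|) := by
        rw [abs_mul, abs_mul, abs_mul, abs_of_nonneg hp0.le,
          abs_of_nonneg (Real.rpow_nonneg (abs_nonneg _) _)]
        calc p * |g s| ^ (p - 1) * |Real.sign (g s)| * |g' s|
            ≤ p * |g s| ^ (p - 1) * 1 * |g' s| := by
              gcongr
              · exact aux_abs_sign _
          _ = p * (|g s| ^ (p - 1) * |g' s|) := by ring
      calc |s ^ q * ((p * |g s| ^ (p - 1) * Real.sign (g s)) * g' s)|
          = s ^ q * |(p * |g s| ^ (p - 1) * Real.sign (g s)) * g' s| := by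
            rw [abs_mul, abs_of_nonneg (Real.rpow_nonneg hs0.le _)]
        _ ≤ s ^ q * (p * (|g s| ^ (p - 1) * |g' s|)) := by
            gcongr
        _ = p * (s ^ q * (|g s| ^ (p - 1) * |g' s|)) := by ring
        _ = p * ((s ^ (-a) * |g s|) ^ (p - 1) * (s ^ (-a + 1) * |g' s|)) := by rw [k2]
        _ ≤ (p - 1) * (s ^ (-a) * |g s|) ^ p + (s ^ (-a + 1) * |g' s|) ^ p :=
            aux_young hp hXnn (by positivity)
        _ = (p - 1) * A s + B s := by rw [kX, kY]
    calc |F' s| ≤ |q * s ^ (q - 1) * G s| + |s ^ q * deriv G s| := abs_add_le _ _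
      _ ≤ |q| * A s + ((p - 1) * A s + B s) := by rw [t1]; gcongr
      _ ≤ (|q| + p) * (A s + B s) := by nlinarith [hAnn s, hBnn s, abs_nonneg q]
  -- the interval [r/2, r]
  have hr2 : (0:ℝ) < r / 2 := by linarith
  have hKsub : Set.Icc (r/2) r ⊆ Set.Ioc (0:ℝ) ℓ := by
    intro s hsK
    exact ⟨by linarith [hsK.1], by linarith [hsK.2]⟩
  have hSsub : Set.Ioc (r/2) r ⊆ Set.Icc (r/2) r := Set.Ioc_subset_Icc_self
  have hSsubI : Set.Ioc (r/2) r ⊆ Set.Ioc (0:ℝ) ℓ := fun s hs => hKsub (hSsub hs)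
  -- continuity facts on K := Icc (r/2) r
  have hgc : ContinuousOn g (Set.Icc (r/2) r) := fun s hs =>
    ((hg s (hKsub hs)).continuousAt).continuousWithinAt
  have habsp : Continuous (fun x : ℝ => |x| ^ p) := by
    rw [continuous_iff_continuousAt]
    intro x
    exact (Real.continuousAt_rpow_const _ _ (Or.inr hp0.le)).comp continuous_abs.continuousAt
  have hGc : ContinuousOn G (Set.Icc (r/2) r) := habsp.comp_continuousOn hgc
  have hpowc : ∀ e : ℝ, ContinuousOn (fun s : ℝ => s ^ e) (Set.Icc (r/2) r) := by
    intro e s hs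
    exact (Real.continuousAt_rpow_const s e (Or.inl (ne_of_gt (lt_of_lt_of_le hr2 hs.1)))).continuousWithinAt
  have hFc : ContinuousOn F (Set.Icc (r/2) r) := (hpowc q).mul hGc
  have hAc : ContinuousOn A (Set.Icc (r/2) r) := by
    have : ContinuousOn (fun s : ℝ => s ^ (-a) * g s) (Set.Icc (r/2) r) :=
      (hpowc (-a)).mul hgc
    exact habsp.comp_continuousOn this
  -- integrability facts
  have hABK : IntegrableOn (fun s => A s + B s) (Set.Icc (r/2) r) := hint.mono_set hKsub
  have hF'meas : AEStronglyMeasurable F' (volume.restrict (Set.Icc (r/2) r)) := by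
    have c1 : ContinuousOn (fun s : ℝ => q * s ^ (q - 1) * G s) (Set.Icc (r/2) r) :=
      ((continuousOn_const.mul (hpowc (q - 1))).mul hGc)
    have m2 : AEStronglyMeasurable (fun s => s ^ q * deriv G s)
        (volume.restrict (Set.Icc (r/2) r)) :=
      ((hpowc q).aestronglyMeasurable measurableSet_Icc).mul
        (measurable_deriv G).aestronglyMeasurable.restrict
    exact (c1.aestronglyMeasurable measurableSet_Icc).add m2
  have hF'K : IntegrableOn F' (Set.Icc (r/2) r) := by
    refine Integrable.mono' (hABK.const_mul (|q| + p)) hF'meas ?_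
    filter_upwards [ae_restrict_mem measurableSet_Icc] with s hs
    rw [Real.norm_eq_abs]
    exact hFb s (hKsub hs)
  have hFK : IntegrableOn F (Set.Icc (r/2) r) := hFc.integrableOn_compact isCompact_Icc
  have hAK : IntegrableOn A (Set.Icc (r/2) r) := hAc.integrableOn_compact isCompact_Icc
  -- D : integral of |F'|
  set D : ℝ := ∫ s in Set.Ioc (r/2) r, |F' s| with hD
  have hDnn : 0 ≤ D := setIntegral_nonneg measurableSet_Ioc fun s _ => abs_nonneg _
  -- FTC step
  have step1 : ∀ t ∈ Set.Ioc (r/2) r, F r ≤ F t + D := by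
    intro t ht
    have htr : t ≤ r := ht.2
    have huIcc : Set.uIcc t r = Set.Icc t r := Set.uIcc_of_le htr
    have hsubK : Set.uIcc t r ⊆ Set.Icc (r/2) r := by
      rw [huIcc]; exact Set.Icc_subset_Icc ht.1.le le_rfl
    have hftc := intervalIntegral.integral_eq_sub_of_hasDerivAt
      (f := F) (f' := F')
      (fun s hs => hF s (hKsub (hsubK hs)))
      ((hF'K.mono_set hsubK).intervalIntegrable)
    have h4 : ∫ s in t..r, F' s ≤ D := by
      calc ∫ s in t..r, F' s ≤ |∫ s in t..r, F' s| := le_abs_self _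
        _ ≤ ∫ s in t..r, |F' s| := intervalIntegral.abs_integral_le_integral_abs htr
        _ = ∫ s in Set.Ioc t r, |F' s| := intervalIntegral.integral_of_le htr
        _ ≤ D := by
            rw [hD]
            refine setIntegral_mono_set ((hF'K.mono_set hSsub).abs) ?_ ?_
            · filter_upwards with s using abs_nonneg _
            · exact (Set.Ioc_subset_Ioc ht.1.le le_rfl).eventuallyLE
    have : F r - F t ≤ D := hftc ▸ h4
    linarith
  -- averaging
  have hvol : (volume (Set.Ioc (r/2) r)).toReal = r / 2 := by
    rw [Real.volume_Ioc, ENNReal.toReal_ofReal (by linarith)]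
    ring
  have step2 : r / 2 * F r ≤ (∫ t in Set.Ioc (r/2) r, F t) + r / 2 * D := by
    have hconst : IntegrableOn (fun _ : ℝ => F r) (Set.Ioc (r/2) r) :=
      integrableOn_const measure_Ioc_lt_top.ne enorm_ne_top
    have hFD : IntegrableOn (fun t => F t + D) (Set.Ioc (r/2) r) :=
      (hFK.mono_set hSsub).add (integrableOn_const measure_Ioc_lt_top.ne enorm_ne_top)
    have h5 := setIntegral_mono_on hconst hFD measurableSet_Ioc step1
    rw [setIntegral_const, measureReal_def, hvol, smul_eq_mul] at h5
    rw [integral_add (hFK.mono_set hSsub) (integrableOn_const measure_Ioc_lt_top.ne enorm_ne_top)] at h5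
    rw [setIntegral_const, measureReal_def, hvol, smul_eq_mul] at h5
    exact h5
  -- bound ∫ F by r * I
  have step3 : (∫ t in Set.Ioc (r/2) r, F t) ≤ r * I := by
    have hpt : ∀ t ∈ Set.Ioc (r/2) r, F t ≤ r * A t := by
      intro t ht
      have ht0 : (0:ℝ) < t := lt_trans hr2 ht.1
      have hFt : F t = t * A t := by
        show t ^ q * |g t| ^ p = t * A t
        rw [hA' t ht0]
        rw [show (t:ℝ) ^ q = t ^ ((1:ℝ) + -(a*p)) from by rw [hq]; ring_nf]
        rw [Real.rpow_add ht0, Real.rpow_one]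
        ring
      rw [hFt]
      exact mul_le_mul_of_nonneg_right ht.2 (hAnn t)
    have h6 := setIntegral_mono_on (hFK.mono_set hSsub)
      ((hAK.mono_set hSsub).const_mul r) measurableSet_Ioc hpt
    rw [integral_const_mul] at h6
    refine h6.trans ?_
    have h7 : (∫ t in Set.Ioc (r/2) r, A t) ≤ I := by
      calc (∫ t in Set.Ioc (r/2) r, A t)
          ≤ ∫ t in Set.Ioc (r/2) r, (A t + B t) := by
            refine setIntegral_mono_on (hAK.mono_set hSsub) (hABK.mono_set hSsub)
              measurableSet_Ioc ?_
            intro t _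
            linarith [hBnn t]
        _ ≤ I := by
            rw [hI]
            exact setIntegral_mono_set hint
              (by filter_upwards with s using hABnn s) hSsubI.eventuallyLE
    exact mul_le_mul_of_nonneg_left h7 hr0.le
  -- bound D
  have step4 : D ≤ (|q| + p) * I := by
    rw [hD]
    calc (∫ s in Set.Ioc (r/2) r, |F' s|)
        ≤ ∫ s in Set.Ioc (r/2) r, (|q| + p) * (A s + B s) := by
          refine setIntegral_mono_on ((hF'K.mono_set hSsub).abs)
            ((hABK.mono_set hSsub).const_mul _) measurableSet_Ioc ?_
          intro s hs
          exact hFb s (hSsubI hs)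
      _ = (|q| + p) * ∫ s in Set.Ioc (r/2) r, (A s + B s) := integral_const_mul _ _
      _ ≤ (|q| + p) * I := by
          refine mul_le_mul_of_nonneg_left ?_ (by positivity)
          rw [hI]
          exact setIntegral_mono_set hint
            (by filter_upwards with s using hABnn s) hSsubI.eventuallyLE
  -- combine
  have hFr : F r ≤ (|q| + p + 2) * I := by
    nlinarith [step2, step3, step4, hInn]
  -- rewrite LHS of the goal
  have hLHS : |r ^ (-(a - 1/p)) * g r| ^ p = F r := by
    rw [abs_mul, abs_of_nonneg (Real.rpow_nonneg hr0.le _),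
      Real.mul_rpow (Real.rpow_nonneg hr0.le _) (abs_nonneg _),
      ← Real.rpow_mul hr0.le]
    rw [show -(a - 1/p) * p = q from by rw [hq]; field_simp; ring]
  rw [hLHS]
  exact hFr
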